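/- Under the assumptions of the previous weight-ratio bound, the function B_k(q) := Σ_{|ℓ|=2k} [weight ratio of ℓ relative to the all-zero sequence ℓ₀] satisfies the uniform bound |B_k(q)| ≤ 2·C(N,2k)·e^{C₁}·(C/N)^{2k} ≤ 2 C^N e^{C₁}/(2k)!, where C = M C₂ with M = cosh(C₂/N). -/

import Mathlib

open Finset

/-- The diagonal/off-diagonal effective potential `V(q,ℓ,ℓ')`. -/
noncomputable def Vpot {d : ℕ} (V₀₀ V₁₁ : (Fin d → ℝ) → ℝ)
    (q : Fin d → ℝ) (ℓ ℓ' : Bool) : ℝ :=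
  if ℓ = ℓ' then (if ℓ then V₁₁ q else V₀₀ q) else (V₀₀ q + V₁₁ q) / 2

/-- Number of kinks of the cyclic configuration `ℓ`. -/
def kinkCount {N : ℕ} [NeZero N] (ℓ : Fin N → Bool) : ℕ :=
  (Finset.univ.filter fun j : Fin N => ℓ j ≠ ℓ (j + 1)).card

/-- The weight ratio of the configuration `ℓ` relative to the all-zero
configuration `ℓ₀`. -/
noncomputable def weightRatio {d N : ℕ} [NeZero N]
    (V₀₀ V₁₁ V₀₁ : (Fin d → ℝ) → ℝ) (βN : ℝ)
    (ℓ : Fin N → Bool) (q : Fin N → (Fin d → ℝ)) : ℝ :=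
  (Real.exp (-βN * ∑ j : Fin N, Vpot V₀₀ V₁₁ (q j) (ℓ j) (ℓ (j + 1)))
      * (∏ j ∈ Finset.univ.filter (fun j : Fin N => ℓ j ≠ ℓ (j + 1)),
          Real.sinh (βN * |V₀₁ (q j)|))
      * (∏ j ∈ (Finset.univ.filter (fun j : Fin N => ℓ j ≠ ℓ (j + 1)))ᶜ,
          Real.cosh (βN * |V₀₁ (q j)|)))
    / (Real.exp (-βN * ∑ j : Fin N, V₀₀ (q j))
      * ∏ j : Fin N, Real.cosh (βN * |V₀₁ (q j)|))

lemma aux_sinh_le_mul_cosh {y : ℝ} (hy : 0 ≤ y) : Real.sinh y ≤ y * Real.cosh y := by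
  have hderiv : ∀ x : ℝ, HasDerivAt (fun x => x * Real.cosh x - Real.sinh x)
      (x * Real.sinh x) x := by
    intro x
    have h := ((hasDerivAt_id x).mul (Real.hasDerivAt_cosh x)).sub (Real.hasDerivAt_sinh x)
    refine h.congr_deriv ?_
    simp
  have hmono : MonotoneOn (fun x => x * Real.cosh x - Real.sinh x) (Set.Ici 0) := by
    apply monotoneOn_of_deriv_nonneg (convex_Ici 0)
    · exact ((continuous_id.mul Real.continuous_cosh).sub Real.continuous_sinh).continuousOn
    · exact fun x _ => (hderiv x).differentiableAt.differentiableWithinAt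
    · intro x hx
      rw [(hderiv x).deriv]
      rw [interior_Ici] at hx
      exact mul_nonneg hx.le (Real.sinh_nonneg_iff.2 hx.le)
  have := hmono (Set.self_mem_Ici) (Set.mem_Ici.2 hy) hy
  simp at this
  linarith

lemma aux_card_kink_le (N : ℕ) [NeZero N] (m : ℕ) :
    (Finset.univ.filter fun ℓ : Fin N → Bool => kinkCount ℓ = m).card
      ≤ 2 * N.choose m := by
  classical
  have hmap : ∀ ℓ ∈ (Finset.univ.filter fun ℓ : Fin N → Bool => kinkCount ℓ = m),
      (ℓ 0, Finset.univ.filter fun j : Fin N => ℓ j ≠ ℓ (j + 1)) ∈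
        (Finset.univ (α := Bool)) ×ˢ ((Finset.univ : Finset (Fin N)).powersetCard m) := by
    intro ℓ hℓ
    simp only [mem_filter, mem_univ, true_and] at hℓ
    simp only [Finset.mem_product, mem_univ, true_and, Finset.mem_powersetCard]
    exact ⟨Finset.subset_univ _, hℓ⟩
  have hinj : Set.InjOn
      (fun ℓ : Fin N → Bool => (ℓ 0, Finset.univ.filter fun j : Fin N => ℓ j ≠ ℓ (j + 1)))
      ((Finset.univ.filter fun ℓ : Fin N → Bool => kinkCount ℓ = m) : Set (Fin N → Bool)) := by
    intro ℓ _ g _ h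
    simp only [Prod.mk.injEq] at h
    obtain ⟨h0, hS⟩ := h
    have hSit : ∀ j : Fin N, (ℓ j ≠ ℓ (j + 1)) ↔ (g j ≠ g (j + 1)) := by
      intro j
      constructor <;> intro hj
      · have : j ∈ Finset.univ.filter fun j : Fin N => g j ≠ g (j + 1) := by
          rw [← hS]; simp [hj]
        simpa using this
      · have : j ∈ Finset.univ.filter fun j : Fin N => ℓ j ≠ ℓ (j + 1) := by
          rw [hS]; simp [hj]
        simpa using this
    have key : ∀ i : ℕ, ∀ h : i < N, ℓ ⟨i, h⟩ = g ⟨i, h⟩ := by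
      intro i
      induction i with
      | zero =>
        intro h
        have : (⟨0, h⟩ : Fin N) = 0 := rfl
        rw [this]; exact h0
      | succ i ih =>
        intro h
        have hi : i < N := Nat.lt_of_succ_lt h
        have hstep : (⟨i + 1, h⟩ : Fin N) = ⟨i, hi⟩ + 1 := by
          apply Fin.ext
          simp [Fin.add_def, Nat.mod_eq_of_lt h]
        rw [hstep]
        have h1 := hSit ⟨i, hi⟩
        have h2 := ih hi
        revert h1 h2
        cases ℓ ⟨i, hi⟩ <;> cases g ⟨i, hi⟩ <;>
          cases ℓ (⟨i, hi⟩ + 1) <;> cases g (⟨i, hi⟩ + 1) <;> simp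
    funext j
    have := key j.1 j.2
    simpa using this
  calc (Finset.univ.filter fun ℓ : Fin N → Bool => kinkCount ℓ = m).card
      ≤ ((Finset.univ (α := Bool)) ×ˢ ((Finset.univ : Finset (Fin N)).powersetCard m)).card :=
        Finset.card_le_card_of_injOn _ hmap hinj
    _ = 2 * N.choose m := by
        rw [Finset.card_product, Finset.card_powersetCard]
        simp

lemma aux_weightRatio_nonneg {d N : ℕ} [NeZero N]
    (V₀₀ V₁₁ V₀₁ : (Fin d → ℝ) → ℝ) (βN : ℝ) (hβN : 0 ≤ βN)
    (ℓ : Fin N → Bool) (q : Fin N → (Fin d → ℝ)) :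
    0 ≤ weightRatio V₀₀ V₁₁ V₀₁ βN ℓ q := by
  unfold weightRatio
  apply div_nonneg
  · apply mul_nonneg
    apply mul_nonneg (Real.exp_pos _).le
    · exact Finset.prod_nonneg fun j _ =>
        Real.sinh_nonneg_iff.2 (mul_nonneg hβN (abs_nonneg _))
    · exact Finset.prod_nonneg fun j _ => (Real.cosh_pos _).le
  · exact mul_nonneg (Real.exp_pos _).le
      (Finset.prod_nonneg fun j _ => (Real.cosh_pos _).le)

lemma aux_weightRatio_le {d N : ℕ} [NeZero N] (k : ℕ)
    (C₁ C₂ : ℝ) (hC₁ : 0 < C₁) (hC₂ : 1 ≤ C₂)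
    (V₀₀ V₁₁ V₀₁ : (Fin d → ℝ) → ℝ)
    (hdiff : ∀ q, V₀₀ q - V₁₁ q ≤ C₁)
    (hoff : ∀ q, 0 < |V₀₁ q| ∧ |V₀₁ q| ≤ C₂)
    (βN : ℝ) (hβN : βN = 1 / (N : ℝ))
    (ℓ : Fin N → Bool) (hℓ : kinkCount ℓ = 2 * k)
    (q : Fin N → (Fin d → ℝ)) :
    weightRatio V₀₀ V₁₁ V₀₁ βN ℓ q
      ≤ Real.exp C₁ * ((Real.cosh (C₂ / (N : ℝ)) * C₂) / (N : ℝ)) ^ (2 * k) := by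
  have hN : (0 : ℝ) < N := by
    exact_mod_cast Nat.pos_of_ne_zero (NeZero.ne N)
  have hβpos : 0 < βN := by rw [hβN]; positivity
  set S := Finset.univ.filter (fun j : Fin N => ℓ j ≠ ℓ (j + 1)) with hSdef
  set x : Fin N → ℝ := fun j => βN * |V₀₁ (q j)| with hxdef
  have hx0 : ∀ j, 0 ≤ x j := fun j => mul_nonneg hβpos.le (abs_nonneg _)
  have hxle : ∀ j, x j ≤ C₂ / (N : ℝ) := by
    intro j
    have h := (hoff (q j)).2
    have h2 : x j ≤ βN * C₂ := mul_le_mul_of_nonneg_left h hβpos.le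
    rw [hβN] at h2
    calc x j ≤ 1 / (N : ℝ) * C₂ := h2
      _ = C₂ / (N : ℝ) := by ring
  have hsplit : (∏ j : Fin N, Real.cosh (x j))
      = (∏ j ∈ S, Real.cosh (x j)) * ∏ j ∈ Sᶜ, Real.cosh (x j) :=
    (Finset.prod_mul_prod_compl S _).symm
  unfold weightRatio
  rw [← hSdef]
  rw [hsplit]
  set E₁ := Real.exp (-βN * ∑ j : Fin N, Vpot V₀₀ V₁₁ (q j) (ℓ j) (ℓ (j + 1)))
  set E₀ := Real.exp (-βN * ∑ j : Fin N, V₀₀ (q j))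
  set Ps := ∏ j ∈ S, Real.sinh (x j)
  set Pc := ∏ j ∈ S, Real.cosh (x j)
  set Pcc := ∏ j ∈ Sᶜ, Real.cosh (x j)
  have hPcc : 0 < Pcc := Finset.prod_pos fun j _ => Real.cosh_pos _
  have hPc : 0 < Pc := Finset.prod_pos fun j _ => Real.cosh_pos _
  have hstep : E₁ * Ps * Pcc / (E₀ * (Pc * Pcc)) = (E₁ / E₀) * (Ps / Pc) := by
    field_simp
  rw [hstep]
  have hE : E₁ / E₀ ≤ Real.exp C₁ := by
    rw [← Real.exp_sub]
    apply Real.exp_le_exp.2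
    have hterm : ∀ j : Fin N, V₀₀ (q j) - Vpot V₀₀ V₁₁ (q j) (ℓ j) (ℓ (j + 1)) ≤ C₁ := by
      intro j
      have hd := hdiff (q j)
      unfold Vpot
      split_ifs <;> linarith
    have hsum : (∑ j : Fin N, (V₀₀ (q j) - Vpot V₀₀ V₁₁ (q j) (ℓ j) (ℓ (j + 1))))
        ≤ (N : ℝ) * C₁ := by
      calc (∑ j : Fin N, (V₀₀ (q j) - Vpot V₀₀ V₁₁ (q j) (ℓ j) (ℓ (j + 1))))
          ≤ ∑ _j : Fin N, C₁ := Finset.sum_le_sum fun j _ => hterm j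
        _ = (N : ℝ) * C₁ := by simp [mul_comm]
    have heq : -βN * ∑ j : Fin N, Vpot V₀₀ V₁₁ (q j) (ℓ j) (ℓ (j + 1))
        - -βN * ∑ j : Fin N, V₀₀ (q j)
        = βN * (∑ j : Fin N, (V₀₀ (q j) - Vpot V₀₀ V₁₁ (q j) (ℓ j) (ℓ (j + 1)))) := by
      rw [Finset.sum_sub_distrib]
      ring
    rw [heq]
    calc βN * (∑ j : Fin N, (V₀₀ (q j) - Vpot V₀₀ V₁₁ (q j) (ℓ j) (ℓ (j + 1))))
        ≤ βN * ((N : ℝ) * C₁) := mul_le_mul_of_nonneg_left hsum hβpos.le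
      _ = C₁ := by rw [hβN]; field_simp
  have hP : Ps / Pc ≤ ((Real.cosh (C₂ / (N : ℝ)) * C₂) / (N : ℝ)) ^ (2 * k) := by
    rw [show Ps / Pc = ∏ j ∈ S, (Real.sinh (x j) / Real.cosh (x j)) from
      (Finset.prod_div_distrib _ _).symm]
    have hfac : ∀ j ∈ S, Real.sinh (x j) / Real.cosh (x j)
        ≤ (Real.cosh (C₂ / (N : ℝ)) * C₂) / (N : ℝ) := by
      intro j _
      have h1 : Real.sinh (x j) / Real.cosh (x j) ≤ Real.sinh (x j) :=
        div_le_self (Real.sinh_nonneg_iff.2 (hx0 j)) (Real.one_le_cosh _)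
      have h2 : Real.sinh (x j) ≤ Real.sinh (C₂ / (N : ℝ)) :=
        Real.sinh_le_sinh.2 (hxle j)
      have h3 : Real.sinh (C₂ / (N : ℝ)) ≤ (C₂ / (N : ℝ)) * Real.cosh (C₂ / (N : ℝ)) :=
        aux_sinh_le_mul_cosh (by positivity)
      calc Real.sinh (x j) / Real.cosh (x j) ≤ Real.sinh (x j) := h1
        _ ≤ Real.sinh (C₂ / (N : ℝ)) := h2
        _ ≤ (C₂ / (N : ℝ)) * Real.cosh (C₂ / (N : ℝ)) := h3
        _ = (Real.cosh (C₂ / (N : ℝ)) * C₂) / (N : ℝ) := by ring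
    calc (∏ j ∈ S, (Real.sinh (x j) / Real.cosh (x j)))
        ≤ ∏ _j ∈ S, (Real.cosh (C₂ / (N : ℝ)) * C₂) / (N : ℝ) :=
          Finset.prod_le_prod (fun j _ => div_nonneg
            (Real.sinh_nonneg_iff.2 (hx0 j)) (Real.cosh_pos _).le) hfac
      _ = ((Real.cosh (C₂ / (N : ℝ)) * C₂) / (N : ℝ)) ^ (2 * k) := by
          rw [Finset.prod_const]
          exact congrArg (fun n => ((Real.cosh (C₂ / (N : ℝ)) * C₂) / (N : ℝ)) ^ n) hℓ
  have hPnn : 0 ≤ Ps / Pc :=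
    div_nonneg (Finset.prod_nonneg fun j _ => Real.sinh_nonneg_iff.2 (hx0 j)) hPc.le
  have hEnn : 0 ≤ E₁ / E₀ := div_nonneg (Real.exp_pos _).le (Real.exp_pos _).le
  exact mul_le_mul hE hP hPnn (Real.exp_pos _).le

theorem Bk_uniform_bound (d N : ℕ) [NeZero N] (k : ℕ) (h2k : 2 * k ≤ N)
    (C₁ C₂ : ℝ) (hC₁ : 0 < C₁) (hC₂ : 1 ≤ C₂)
    (V₀₀ V₁₁ V₀₁ : (Fin d → ℝ) → ℝ)
    (hdiff : ∀ q, V₀₀ q - V₁₁ q ≤ C₁)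
    (hoff : ∀ q, 0 < |V₀₁ q| ∧ |V₀₁ q| ≤ C₂)
    (βN : ℝ) (hβN : βN = 1 / (N : ℝ))
    (q : Fin N → (Fin d → ℝ)) :
    let C : ℝ := Real.cosh (C₂ / (N : ℝ)) * C₂
    |∑ ℓ ∈ Finset.univ.filter (fun ℓ : Fin N → Bool => kinkCount ℓ = 2 * k),
        weightRatio V₀₀ V₁₁ V₀₁ βN ℓ q|
      ≤ 2 * (N.choose (2 * k)) * Real.exp C₁ * (C / (N : ℝ)) ^ (2 * k) ∧
    2 * (N.choose (2 * k)) * Real.exp C₁ * (C / (N : ℝ)) ^ (2 * k)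
      ≤ 2 * C ^ N * Real.exp C₁ / (Nat.factorial (2 * k)) := by
  intro C
  have hN : (0 : ℝ) < N := by
    exact_mod_cast Nat.pos_of_ne_zero (NeZero.ne N)
  have hβpos : 0 < βN := by rw [hβN]; positivity
  have hC1le : 1 ≤ C := by
    have h1 := Real.one_le_cosh (C₂ / (N : ℝ))
    have : (1 : ℝ) * 1 ≤ Real.cosh (C₂ / (N : ℝ)) * C₂ :=
      mul_le_mul h1 hC₂ zero_le_one (by linarith)
    simpa using this
  have hCpos : 0 < C := lt_of_lt_of_le one_pos hC1le
  constructor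
  · have hnn : 0 ≤ ∑ ℓ ∈ Finset.univ.filter
        (fun ℓ : Fin N → Bool => kinkCount ℓ = 2 * k),
        weightRatio V₀₀ V₁₁ V₀₁ βN ℓ q :=
      Finset.sum_nonneg fun ℓ _ => aux_weightRatio_nonneg V₀₀ V₁₁ V₀₁ βN hβpos.le ℓ q
    rw [abs_of_nonneg hnn]
    have hb : (0 : ℝ) ≤ Real.exp C₁ * (C / (N : ℝ)) ^ (2 * k) := by positivity
    calc (∑ ℓ ∈ Finset.univ.filter (fun ℓ : Fin N → Bool => kinkCount ℓ = 2 * k),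
          weightRatio V₀₀ V₁₁ V₀₁ βN ℓ q)
        ≤ (Finset.univ.filter (fun ℓ : Fin N → Bool => kinkCount ℓ = 2 * k)).card
            • (Real.exp C₁ * (C / (N : ℝ)) ^ (2 * k)) := by
          apply Finset.sum_le_card_nsmul
          intro ℓ hℓ
          simp only [mem_filter, mem_univ, true_and] at hℓ
          exact aux_weightRatio_le k C₁ C₂ hC₁ hC₂ V₀₀ V₁₁ V₀₁ hdiff hoff βN hβN ℓ hℓ q
      _ ≤ (2 * N.choose (2 * k)) * (Real.exp C₁ * (C / (N : ℝ)) ^ (2 * k)) := by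
          rw [nsmul_eq_mul]
          apply mul_le_mul_of_nonneg_right _ hb
          exact_mod_cast aux_card_kink_le N (2 * k)
      _ = 2 * (N.choose (2 * k)) * Real.exp C₁ * (C / (N : ℝ)) ^ (2 * k) := by ring
  · have hfac : ((N.choose (2 * k) : ℝ)) * (Nat.factorial (2 * k)) ≤ (N : ℝ) ^ (2 * k) := by
      have h := Nat.descFactorial_le_pow N (2 * k)
      rw [Nat.descFactorial_eq_factorial_mul_choose] at h
      exact_mod_cast by linarith [h] ;
    have hCpow : C ^ (2 * k) ≤ C ^ N := pow_le_pow_right₀ hC1le h2k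
    have hfacpos : (0 : ℝ) < (Nat.factorial (2 * k) : ℝ) := by
      exact_mod_cast Nat.factorial_pos _
    have hrw : 2 * (N.choose (2 * k)) * Real.exp C₁ * (C / (N : ℝ)) ^ (2 * k)
        = (2 * Real.exp C₁ * ((N.choose (2 * k) : ℝ) * C ^ (2 * k))) / (N : ℝ) ^ (2 * k) := by
      rw [div_pow]
      ring
    rw [hrw, div_le_div_iff₀ (by positivity) hfacpos]
    have key : ((N.choose (2 * k) : ℝ)) * (Nat.factorial (2 * k)) * C ^ (2 * k)
        ≤ (N : ℝ) ^ (2 * k) * C ^ N :=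
      mul_le_mul hfac hCpow (by positivity) (by positivity)
    calc 2 * Real.exp C₁ * ((N.choose (2 * k) : ℝ) * C ^ (2 * k)) * (Nat.factorial (2 * k))
        = 2 * Real.exp C₁ * ((N.choose (2 * k) : ℝ) * (Nat.factorial (2 * k)) * C ^ (2 * k)) := by
          ring
      _ ≤ 2 * Real.exp C₁ * ((N : ℝ) ^ (2 * k) * C ^ N) :=
          mul_le_mul_of_nonneg_left key (by positivity)
      _ = 2 * C ^ N * Real.exp C₁ * (N : ℝ) ^ (2 * k) := by ring
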